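/- Let $A \in \mathbb{C}^{p\times p}$ with $\rho(A)<1$, $\Gamma_A = \sum_n A^nA^{*n}$, $L_A^{-1} = A^*A + \Gamma_A^{-1}$. Define $\mathcal{A} = A^*$, $\mathcal{B} = \Gamma_A^{-1}L_A^{1/2}$, $\mathcal{C} = I_p$, $\mathcal{D} = -AL_A^{1/2}$. Then the block matrix $\begin{pmatrix}\mathcal{A}&\mathcal{B}\\ \mathcal{C}&\mathcal{D}\end{pmatrix}$ satisfies $\begin{pmatrix}\mathcal{A}&\mathcal{B}\\ \mathcal{C}&\mathcal{D}\end{pmatrix}^* \begin{pmatrix}\Gamma_A&0\\0&I_p\end{pmatrix} \begin{pmatrix}\mathcal{A}&\mathcal{B}\\ \mathcal{C}&\mathcal{D}\end{pmatrix} = \begin{pmatrix}\Gamma_A&0\\0&I_p\end{pmatrix}$. -/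

import Mathlib

open scoped ENNReal Matrix ComplexOrder
open Filter

attribute [local instance] Matrix.linftyOpNormedRing Matrix.linftyOpNormedAlgebra

/-- The square root of a positive semidefinite matrix, as defined in Mathlib (December 2024),
since removed: `U * diagonal (√ ∘ eigenvalues) * U*` with `U` the eigenvector unitary. -/
noncomputable def Matrix.PosSemidef.sqrt {n 𝕜 : Type*} [Fintype n] [RCLike 𝕜] [DecidableEq n]
    {A : Matrix n n 𝕜} (hA : A.PosSemidef) : Matrix n n 𝕜 :=
  hA.1.eigenvectorUnitary.1 * Matrix.diagonal ((↑) ∘ (fun x : ℝ => √x) ∘ hA.1.eigenvalues) *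
    (star hA.1.eigenvectorUnitary : Matrix n n 𝕜)

namespace Stmt10Aux

variable {p : ℕ}


lemma nnnorm_entry_le (M : Matrix (Fin p) (Fin p) ℂ) (i j : Fin p) : ‖M i j‖₊ ≤ ‖M‖₊ := by
  rw [Matrix.linfty_opNNNorm_def]
  exact le_trans (Finset.single_le_sum (f := fun k => ‖M i k‖₊) (by simp) (Finset.mem_univ j))
    (Finset.le_sup (f := fun i => ∑ j, ‖M i j‖₊) (Finset.mem_univ i))

lemma nnnorm_conjT_le (M : Matrix (Fin p) (Fin p) ℂ) : ‖Mᴴ‖₊ ≤ p * ‖M‖₊ := by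
  rw [Matrix.linfty_opNNNorm_def]
  refine Finset.sup_le fun i _ => ?_
  calc ∑ j, ‖Mᴴ i j‖₊ ≤ ∑ _j : Fin p, ‖M‖₊ := by
        refine Finset.sum_le_sum fun j _ => ?_
        simpa [Matrix.conjTranspose_apply] using nnnorm_entry_le M j i
    _ = p * ‖M‖₊ := by simp [mul_comm]

lemma summable_terms (A : Matrix (Fin p) (Fin p) ℂ) (hA : spectralRadius ℂ A < 1) :
    Summable (fun n : ℕ => A ^ n * Aᴴ ^ n) := by
  obtain ⟨r, hρr, hr1⟩ := ENNReal.lt_iff_exists_nnreal_btwn.mp hA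
  have hr1' : (r : ℝ) < 1 := by exact_mod_cast hr1
  have hr0 : (0:ℝ) ≤ r := r.coe_nonneg
  have hgel := spectrum.pow_nnnorm_pow_one_div_tendsto_nhds_spectralRadius A
  have hev : ∀ᶠ n : ℕ in atTop, (‖A ^ n‖₊ : ℝ≥0∞) ^ (1 / (n:ℝ)) < (r : ℝ≥0∞) :=
    hgel.eventually_lt_const hρr
  have hbound : ∀ᶠ n : ℕ in atTop, ‖A ^ n‖ ≤ (r:ℝ) ^ n := by
    filter_upwards [hev, eventually_gt_atTop 0] with n hn hn0
    have h1 : ((‖A ^ n‖₊ : ℝ≥0∞) ^ (1 / (n:ℝ))) ^ (n : ℝ) ≤ (r : ℝ≥0∞) ^ (n : ℝ) :=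
      ENNReal.rpow_le_rpow hn.le (Nat.cast_nonneg n)
    rw [← ENNReal.rpow_mul, one_div_mul_cancel (by exact_mod_cast hn0.ne'),
      ENNReal.rpow_one, ENNReal.rpow_natCast, ← ENNReal.coe_pow, ENNReal.coe_le_coe] at h1
    exact_mod_cast h1
  refine Summable.of_norm_bounded_eventually (g := fun n => (p:ℝ) * (((r:ℝ)*(r:ℝ)) ^ n)) ?_ ?_
  · exact (summable_geometric_of_lt_one (by positivity) (by nlinarith)).mul_left _
  · rw [Nat.cofinite_eq_atTop]
    filter_upwards [hbound] with n hn
    have hAn : (0:ℝ) ≤ ‖A ^ n‖ := norm_nonneg _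
    have h2 : ‖Aᴴ ^ n‖ ≤ (p:ℝ) * ‖A ^ n‖ := by
      rw [← Matrix.conjTranspose_pow]
      exact_mod_cast nnnorm_conjT_le (A ^ n)
    calc ‖A ^ n * Aᴴ ^ n‖ ≤ ‖A ^ n‖ * ‖Aᴴ ^ n‖ := norm_mul_le _ _
      _ ≤ ‖A ^ n‖ * ((p:ℝ) * ‖A ^ n‖) := by
          exact mul_le_mul_of_nonneg_left h2 hAn
      _ ≤ ((r:ℝ) ^ n) * ((p:ℝ) * ((r:ℝ) ^ n)) := by
          have hrn : (0:ℝ) ≤ (r:ℝ) ^ n := by positivity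
          apply mul_le_mul hn _ (by positivity) hrn
          exact mul_le_mul_of_nonneg_left hn (by positivity)
      _ = (p:ℝ) * (((r:ℝ)*(r:ℝ)) ^ n) := by rw [mul_pow]; ring




lemma stein (A : Matrix (Fin p) (Fin p) ℂ) (hA : spectralRadius ℂ A < 1) :
    (∑' n : ℕ, A ^ n * Aᴴ ^ n) = 1 + A * (∑' n : ℕ, A ^ n * Aᴴ ^ n) * Aᴴ := by
  have hsum := summable_terms A hA
  conv_lhs => rw [hsum.tsum_eq_zero_add]
  rw [pow_zero, pow_zero, one_mul]
  congr 1
  have h1 : ∀ n : ℕ, A ^ (n + 1) * Aᴴ ^ (n + 1) = A * (A ^ n * Aᴴ ^ n) * Aᴴ := by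
    intro n
    rw [pow_succ', pow_succ]
    noncomm_ring
  simp_rw [h1]
  rw [Summable.tsum_mul_right _ (hsum.mul_left A), Summable.tsum_mul_left _ hsum]

/-- conjTranspose as a real-linear map on matrices. -/
noncomputable def ctMap : Matrix (Fin p) (Fin p) ℂ →ₗ[ℝ] Matrix (Fin p) (Fin p) ℂ where
  toFun := Matrix.conjTranspose
  map_add' := fun M N => Matrix.conjTranspose_add M N
  map_smul' := fun r M => by
    ext i j
    simp [Matrix.conjTranspose_apply, star_smul]

lemma herm (A : Matrix (Fin p) (Fin p) ℂ) (hA : spectralRadius ℂ A < 1) :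
    (∑' n : ℕ, A ^ n * Aᴴ ^ n).IsHermitian := by
  have hsum := summable_terms A hA
  have hct : Continuous (ctMap (p := p)) := ctMap.continuous_of_finiteDimensional
  have h := hsum.hasSum.map ctMap hct
  have h2 : ∀ n : ℕ, ctMap (A ^ n * Aᴴ ^ n) = A ^ n * Aᴴ ^ n := by
    intro n
    show (A ^ n * Aᴴ ^ n)ᴴ = A ^ n * Aᴴ ^ n
    simp [Matrix.conjTranspose_mul, Matrix.conjTranspose_pow]
  show ctMap (∑' n : ℕ, A ^ n * Aᴴ ^ n) = _
  rw [← h.tsum_eq]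
  simp_rw [Function.comp_def, h2]

lemma psd (A : Matrix (Fin p) (Fin p) ℂ) (hA : spectralRadius ℂ A < 1) :
    (∑' n : ℕ, A ^ n * Aᴴ ^ n).PosSemidef := by
  have hsum := summable_terms A hA
  refine Matrix.PosSemidef.of_dotProduct_mulVec_nonneg (herm A hA) fun x => ?_
  let g : Matrix (Fin p) (Fin p) ℂ →ₗ[ℂ] ℂ :=
    { toFun := fun M => dotProduct (star x) (M.mulVec x)
      map_add' := fun M N => by simp [Matrix.add_mulVec, dotProduct_add]
      map_smul' := fun c M => by simp [Matrix.smul_mulVec, dotProduct_smul] }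
  have hg : Continuous g := g.continuous_of_finiteDimensional
  have h := (hsum.hasSum.map g hg).tsum_eq
  show (0:ℂ) ≤ g (∑' n : ℕ, A ^ n * Aᴴ ^ n)
  rw [← h]
  refine tsum_nonneg fun n => ?_
  simp only [Function.comp_apply]
  have hspd : (A ^ n * Aᴴ ^ n).PosSemidef := by
    rw [← Matrix.conjTranspose_pow]
    exact Matrix.posSemidef_self_mul_conjTranspose (A ^ n)
  exact hspd.dotProduct_mulVec_nonneg x


lemma sqrt_mul_self' {L : Matrix (Fin p) (Fin p) ℂ} (hL : L.PosSemidef) :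
    hL.sqrt * hL.sqrt = L := by
  have hU : (star hL.1.eigenvectorUnitary : Matrix (Fin p) (Fin p) ℂ) *
      hL.1.eigenvectorUnitary.1 = 1 := Unitary.coe_star_mul_self _
  have hD : Matrix.diagonal (((↑) ∘ (fun x : ℝ => √x) ∘ hL.1.eigenvalues) : Fin p → ℂ) *
      Matrix.diagonal ((↑) ∘ (fun x : ℝ => √x) ∘ hL.1.eigenvalues) =
      Matrix.diagonal (RCLike.ofReal ∘ hL.1.eigenvalues) := by
    rw [Matrix.diagonal_mul_diagonal]
    congr 1
    funext i
    simp only [Function.comp_apply]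
    rw [← Complex.ofReal_mul, Real.mul_self_sqrt (hL.eigenvalues_nonneg i)]
    rfl
  conv_rhs => rw [hL.1.spectral_theorem]
  rw [Matrix.PosSemidef.sqrt]
  calc _ = hL.1.eigenvectorUnitary.1 * Matrix.diagonal ((↑) ∘ (fun x : ℝ => √x) ∘ hL.1.eigenvalues) *
        ((star hL.1.eigenvectorUnitary : Matrix (Fin p) (Fin p) ℂ) * hL.1.eigenvectorUnitary.1) *
        Matrix.diagonal ((↑) ∘ (fun x : ℝ => √x) ∘ hL.1.eigenvalues) *
        (star hL.1.eigenvectorUnitary : Matrix (Fin p) (Fin p) ℂ) := by noncomm_ring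
    _ = _ := by
      rw [hU, mul_one, mul_assoc _ (Matrix.diagonal _) (Matrix.diagonal _), hD]
      simp [Unitary.conjStarAlgAut_apply, mul_assoc]

lemma sqrt_herm {L : Matrix (Fin p) (Fin p) ℂ} (hL : L.PosSemidef) :
    hL.sqrtᴴ = hL.sqrt := by
  rw [Matrix.PosSemidef.sqrt, Matrix.conjTranspose_mul, Matrix.conjTranspose_mul,
    Matrix.diagonal_conjTranspose]
  have : star ((RCLike.ofReal ∘ (fun x : ℝ => √x) ∘ hL.1.eigenvalues) : Fin p → ℂ) =
      RCLike.ofReal ∘ (fun x : ℝ => √x) ∘ hL.1.eigenvalues := by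
    funext i; simp
  rw [this, ← Matrix.star_eq_conjTranspose, ← Matrix.star_eq_conjTranspose, star_star,
    mul_assoc]

end Stmt10Aux

/-- The realization `(𝒜, ℬ, 𝒞, 𝒟) = (A*, Γ⁻¹ L^{1/2}, I, -A L^{1/2})` of the Blaschke
factor satisfies `M* diag(Γ, I) M = diag(Γ, I)` where `M` is the block matrix. -/
theorem stmt10 {p : ℕ} (A : Matrix (Fin p) (Fin p) ℂ)
    (hA : spectralRadius ℂ A < 1)
    (Γ : Matrix (Fin p) (Fin p) ℂ) (hΓ : Γ = ∑' n : ℕ, A ^ n * Aᴴ ^ n)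
    (L : Matrix (Fin p) (Fin p) ℂ) (hL : L⁻¹ = Aᴴ * A + Γ⁻¹)
    (hLpsd : L.PosSemidef) :
    (Matrix.fromBlocks Aᴴ (Γ⁻¹ * hLpsd.sqrt) 1 (-(A * hLpsd.sqrt)))ᴴ *
        Matrix.fromBlocks Γ 0 0 1 *
        Matrix.fromBlocks Aᴴ (Γ⁻¹ * hLpsd.sqrt) 1 (-(A * hLpsd.sqrt)) =
      Matrix.fromBlocks Γ 0 0 1 := by
  have hΓpsd : Γ.PosSemidef := hΓ ▸ Stmt10Aux.psd A hA
  have hstein : Γ = 1 + A * Γ * Aᴴ := by rw [hΓ]; exact Stmt10Aux.stein A hA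
  have hΓpd : Γ.PosDef := by
    rw [hstein]
    exact Matrix.PosDef.add_posSemidef Matrix.PosDef.one (hΓpsd.mul_mul_conjTranspose_same A)
  have hΓdet : IsUnit Γ.det := hΓpd.det_pos.ne'.isUnit
  have hΓΓi : Γ * Γ⁻¹ = 1 := Matrix.mul_nonsing_inv Γ hΓdet
  have hΓiΓ : Γ⁻¹ * Γ = 1 := Matrix.nonsing_inv_mul Γ hΓdet
  have hΓih : Γ⁻¹ᴴ = Γ⁻¹ := by rw [Matrix.conjTranspose_nonsing_inv, hΓpsd.1]
  have hLipd : L⁻¹.PosDef := by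
    rw [hL, add_comm]
    exact Matrix.PosDef.add_posSemidef hΓpd.inv (Matrix.posSemidef_conjTranspose_mul_self A)
  have hLdet : IsUnit L.det := Matrix.isUnit_nonsing_inv_det_iff.mp hLipd.det_pos.ne'.isUnit
  set S := hLpsd.sqrt with hSdef
  have hSS : S * S = L := Stmt10Aux.sqrt_mul_self' hLpsd
  have hSh : Sᴴ = S := Stmt10Aux.sqrt_herm hLpsd
  have hSdet : IsUnit S.det := by
    have h := hLdet
    rw [← hSS, Matrix.det_mul] at h
    exact (IsUnit.mul_iff.mp h).1
  have hSLS : S * L⁻¹ * S = 1 := by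
    rw [← hSS, Matrix.mul_inv_rev]
    calc S * (S⁻¹ * S⁻¹) * S = (S * S⁻¹) * (S⁻¹ * S) := by noncomm_ring
      _ = 1 := by rw [Matrix.mul_nonsing_inv _ hSdet, Matrix.nonsing_inv_mul _ hSdet, one_mul]
  rw [Matrix.fromBlocks_conjTranspose, Matrix.fromBlocks_multiply, Matrix.fromBlocks_multiply]
  refine Matrix.fromBlocks_inj.mpr ⟨?_, ?_, ?_, ?_⟩
  · simp only [Matrix.conjTranspose_conjTranspose, Matrix.conjTranspose_one, mul_zero, add_zero,
      mul_one, one_mul, zero_mul, zero_add, Matrix.conjTranspose_mul, Matrix.conjTranspose_neg,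
      hSh, hΓih]
    conv_rhs => rw [hstein]
    rw [add_comm]
  · simp only [Matrix.conjTranspose_conjTranspose, Matrix.conjTranspose_one, mul_zero, add_zero,
      mul_one, one_mul, zero_mul, zero_add, Matrix.conjTranspose_mul, Matrix.conjTranspose_neg,
      hSh, hΓih]
    have h2 : A * Γ * (Γ⁻¹ * S) = A * S := by
      calc A * Γ * (Γ⁻¹ * S) = A * (Γ * Γ⁻¹) * S := by noncomm_ring
        _ = A * S := by rw [hΓΓi, mul_one]
    rw [h2]
    exact add_neg_cancel _
  · simp only [Matrix.conjTranspose_conjTranspose, Matrix.conjTranspose_one, mul_zero, add_zero,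
      mul_one, one_mul, zero_mul, zero_add, Matrix.conjTranspose_mul, Matrix.conjTranspose_neg,
      hSh, hΓih]
    have h3 : S * Γ⁻¹ * Γ * Aᴴ = S * Aᴴ := by
      calc S * Γ⁻¹ * Γ * Aᴴ = S * (Γ⁻¹ * Γ) * Aᴴ := by noncomm_ring
        _ = S * Aᴴ := by rw [hΓiΓ, mul_one]
    rw [h3]
    exact add_neg_cancel _
  · simp only [Matrix.conjTranspose_conjTranspose, Matrix.conjTranspose_one, mul_zero, add_zero,
      mul_one, one_mul, zero_mul, zero_add, Matrix.conjTranspose_mul, Matrix.conjTranspose_neg,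
      hSh, hΓih, neg_mul_neg]
    have h5 : S * (Aᴴ * A + Γ⁻¹) * S = 1 := by rw [← hL]; exact hSLS
    calc S * Γ⁻¹ * Γ * (Γ⁻¹ * S) + S * Aᴴ * (A * S)
        = S * (Γ⁻¹ * Γ) * (Γ⁻¹ * S) + S * Aᴴ * (A * S) := by noncomm_ring
      _ = S * (Γ⁻¹ * S) + S * Aᴴ * (A * S) := by rw [hΓiΓ, mul_one]
      _ = S * (Aᴴ * A + Γ⁻¹) * S := by noncomm_ring
      _ = 1 := h5
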